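/- (Lemma 4.4, case (i).) Let {x^k} be a sequence generated by Algorithm 3.1 with data M > 0 and x⁰, let r > 0 be such that M is a Lipschitz constant of f on the closed ball B(x⁰, r), and suppose the closed ball B(x⁰, r/2) contains a point of the topological interior of Q. Then {x^k} has at least one accumulation point, and every accumulation point x* of {x^k} satisfies f(x*) ≤ 0 (i.e., x* ∈ Q). -/

import Mathlib

open Filter Topology

noncomputable section

abbrev Euc (n : ℕ) := EuclideanSpace ℝ (Fin n)

/-- `ξ` is a subgradient of `g` at `x`. -/
def IsSubgradAt {n : ℕ} (g : Euc n → ℝ) (x ξ : Euc n) : Prop :=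
  ∀ y : Euc n, g x + (inner ℝ ξ (y - x) : ℝ) ≤ g y

/-- The envelope `f(x) = max_i f_i(x)` of finitely many functions. -/
def envl {n m : ℕ} [NeZero m] (f : Fin m → Euc n → ℝ) (x : Euc n) : ℝ :=
  Finset.univ.sup' Finset.univ_nonempty fun i => f i x

/-- The sequence `x` with relaxation parameters `lam` is generated by Algorithm 3.1
with data `M` for the family `f`. -/
def IsAlgSeq {n m : ℕ} [NeZero m] (f : Fin m → Euc n → ℝ) (M : ℝ)
    (x : ℕ → Euc n) (lam : ℕ → ℝ) : Prop :=
  ∀ k : ℕ, 0 ≤ lam k ∧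
    max 0 (envl f (x k)) ≤ lam k * M ^ 2 ∧
    lam k * M ^ 2 ≤ 2 * max 0 (envl f (x k)) ∧
    ∃ (w : Fin m → ℝ) (ξ : Fin m → Euc n),
      (∀ i, 0 ≤ w i) ∧ (∑ i, w i) = 1 ∧
      (∀ i, f i (x k) < envl f (x k) → w i = 0) ∧
      (∀ i, IsSubgradAt (f i) (x k) (ξ i)) ∧
      x (k + 1) = x k - lam k • ∑ i, w i • ξ i

lemma le_envl {n m : ℕ} [NeZero m] (f : Fin m → Euc n → ℝ) (x : Euc n) (i : Fin m) :
    f i x ≤ envl f x := by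
  unfold envl
  exact Finset.le_sup' (fun j => f j x) (Finset.mem_univ i)

/-- The averaged subgradient is a subgradient of the envelope. -/
lemma envl_subgrad {n m : ℕ} [NeZero m] (f : Fin m → Euc n → ℝ)
    (x : Euc n) (w : Fin m → ℝ) (ξ : Fin m → Euc n)
    (hw : ∀ i, 0 ≤ w i) (hw1 : (∑ i, w i) = 1)
    (hwe : ∀ i, f i x < envl f x → w i = 0)
    (hξ : ∀ i, IsSubgradAt (f i) x (ξ i)) :
    ∀ y, envl f x + (inner ℝ (∑ i, w i • ξ i) (y - x) : ℝ) ≤ envl f y := by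
  intro y
  have hx : (∑ i, w i * f i x) = envl f x := by
    have h1 : ∀ i ∈ Finset.univ, w i * f i x = w i * envl f x := by
      intro i _
      rcases lt_or_eq_of_le (le_envl f x i) with h | h
      · rw [hwe i h]; ring
      · rw [h]
    rw [Finset.sum_congr rfl h1, ← Finset.sum_mul, hw1, one_mul]
  have hinner : (inner ℝ (∑ i, w i • ξ i) (y - x) : ℝ) = ∑ i, w i * inner ℝ (ξ i) (y - x) := by
    rw [sum_inner]
    exact Finset.sum_congr rfl fun i _ => real_inner_smul_left _ _ _
  have key : ∑ i, w i * (f i x + (inner ℝ (ξ i) (y - x) : ℝ)) ≤ envl f y := by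
    calc ∑ i, w i * (f i x + (inner ℝ (ξ i) (y - x) : ℝ))
        ≤ ∑ i, w i * envl f y := by
          apply Finset.sum_le_sum
          intro i _
          exact mul_le_mul_of_nonneg_left ((hξ i y).trans (le_envl f y i)) (hw i)
      _ = envl f y := by rw [← Finset.sum_mul, hw1, one_mul]
  calc envl f x + (inner ℝ (∑ i, w i • ξ i) (y - x) : ℝ)
      = ∑ i, w i * (f i x + (inner ℝ (ξ i) (y - x) : ℝ)) := by
        simp only [mul_add, Finset.sum_add_distrib, hx, hinner]
    _ ≤ envl f y := key

/-- Subgradient norm bound from Lipschitz continuity. -/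
lemma subgrad_norm_le {n : ℕ} (F : Euc n → ℝ) (M r ρ : ℝ) (x0 p ν : Euc n)
    (hρ : 0 < ρ) (hM : 0 ≤ M)
    (hLip : ∀ y z : Euc n, y ∈ Metric.closedBall x0 r → z ∈ Metric.closedBall x0 r →
      |F y - F z| ≤ M * ‖y - z‖)
    (hp : ‖p - x0‖ ≤ r - ρ)
    (hsub : ∀ y, F p + (inner ℝ ν (y - p) : ℝ) ≤ F y) : ‖ν‖ ≤ M := by
  rcases eq_or_ne ν 0 with h | h
  · simp [h, hM]
  · have hν : (0:ℝ) < ‖ν‖ := norm_pos_iff.mpr h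
    set y := p + (ρ * ‖ν‖⁻¹) • ν with hy
    have hyp : y - p = (ρ * ‖ν‖⁻¹) • ν := by rw [hy]; abel
    have hip : (inner ℝ ν (y - p) : ℝ) = ρ * ‖ν‖ := by
      rw [hyp, real_inner_smul_right, real_inner_self_eq_norm_sq]
      field_simp
    have hnyp : ‖y - p‖ = ρ := by
      rw [hyp, norm_smul, Real.norm_eq_abs,
        abs_of_nonneg (show (0:ℝ) ≤ ρ * ‖ν‖⁻¹ by positivity)]
      field_simp
    have hpmem : p ∈ Metric.closedBall x0 r := by
      rw [Metric.mem_closedBall, dist_eq_norm]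
      linarith
    have hymem : y ∈ Metric.closedBall x0 r := by
      rw [Metric.mem_closedBall, dist_eq_norm]
      calc ‖y - x0‖ ≤ ‖y - p‖ + ‖p - x0‖ := norm_sub_le_norm_sub_add_norm_sub _ _ _
        _ ≤ ρ + (r - ρ) := by rw [hnyp]; linarith
        _ = r := by ring
    have h1 := hsub y
    rw [hip] at h1
    have h2 := hLip y p hymem hpmem
    rw [hnyp] at h2
    have h3 : F y - F p ≤ M * ρ := (le_abs_self _).trans h2
    have : ρ * ‖ν‖ ≤ M * ρ := by linarith
    nlinarith

/-- Strengthened subgradient inequality using an interior ball. -/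
lemma subgrad_interior_bound {n : ℕ} (F : Euc n → ℝ) (ρ : ℝ) (z' p ν : Euc n)
    (hρ : 0 < ρ)
    (hQ : ∀ y ∈ Metric.closedBall z' ρ, F y ≤ 0)
    (hsub : ∀ y, F p + (inner ℝ ν (y - p) : ℝ) ≤ F y) :
    F p + ρ * ‖ν‖ ≤ (inner ℝ ν (p - z') : ℝ) := by
  rcases eq_or_ne ν 0 with h | h
  · have h1 := hsub z'
    have h2 := hQ z' (Metric.mem_closedBall_self hρ.le)
    simp only [h, inner_zero_left] at h1 ⊢
    simp only [norm_zero, mul_zero]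
    linarith
  · have hν : (0:ℝ) < ‖ν‖ := norm_pos_iff.mpr h
    set y := z' + (ρ * ‖ν‖⁻¹) • ν with hy
    have hymem : y ∈ Metric.closedBall z' ρ := by
      rw [Metric.mem_closedBall, dist_eq_norm]
      have : y - z' = (ρ * ‖ν‖⁻¹) • ν := by rw [hy]; abel
      rw [this, norm_smul, Real.norm_eq_abs, abs_mul, abs_of_pos hρ, abs_inv, abs_norm]
      field_simp
      exact le_rfl
    have h1 := hsub y
    have h2 := hQ y hymem
    have hyp : y - p = (z' - p) + (ρ * ‖ν‖⁻¹) • ν := by rw [hy]; abel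
    have hip : (inner ℝ ν (y - p) : ℝ) = -(inner ℝ ν (p - z') : ℝ) + ρ * ‖ν‖ := by
      rw [hyp, inner_add_right, real_inner_smul_right, real_inner_self_eq_norm_sq]
      have : (inner ℝ ν (z' - p) : ℝ) = -(inner ℝ ν (p - z') : ℝ) := by
        rw [← inner_neg_right]; congr 1; abel
      rw [this]
      congr 1
      field_simp
    rw [hip] at h1
    linarith

lemma sum_range_le_of_step (a g : ℕ → ℝ) (ha : ∀ k, 0 ≤ a k)
    (h : ∀ k, a (k+1) ≤ a k - g k) : ∀ N, ∑ k ∈ Finset.range N, g k ≤ a 0 := by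
  have key : ∀ N, ∑ k ∈ Finset.range N, g k ≤ a 0 - a N := by
    intro N; induction N with
    | zero => simp
    | succ N ih => rw [Finset.sum_range_succ]; have := h N; linarith
  intro N; have h1 := key N; have h2 := ha N; linarith


set_option maxHeartbeats 2000000 in
theorem stmt5
    {n m : ℕ} (hn : 0 < n) [NeZero m] (f : Fin m → Euc n → ℝ)
    (hconv : ∀ i, ConvexOn ℝ Set.univ (f i))
    (M : ℝ) (hM : 0 < M) (x : ℕ → Euc n) (lam : ℕ → ℝ)
    (halg : IsAlgSeq f M x lam) (x0 : Euc n) (hx0 : x 0 = x0)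
    (r : ℝ) (hr : 0 < r)
    (hLip : ∀ y z : Euc n, y ∈ Metric.closedBall x0 r → z ∈ Metric.closedBall x0 r →
      |envl f y - envl f z| ≤ M * ‖y - z‖)
    (hint : ∃ z : Euc n, z ∈ Metric.closedBall x0 (r / 2) ∧
      z ∈ interior {y : Euc n | envl f y ≤ 0}) :
    (∃ (xs : Euc n) (φ : ℕ → ℕ), StrictMono φ ∧ Tendsto (x ∘ φ) atTop (𝓝 xs)) ∧
    (∀ xs : Euc n, (∃ φ : ℕ → ℕ, StrictMono φ ∧ Tendsto (x ∘ φ) atTop (𝓝 xs)) →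
      envl f xs ≤ 0) := by
  classical
  obtain ⟨z, hz1, hz2⟩ := hint
  rw [mem_interior_iff_mem_nhds, Metric.mem_nhds_iff] at hz2
  obtain ⟨ε, hε, hball⟩ := hz2
  set ρ : ℝ := min (ε/4) (r/8) with hρdef
  have hρ : 0 < ρ := lt_min (by linarith) (by linarith)
  have hρr : ρ ≤ r/8 := min_le_right _ _
  have hρε : ρ ≤ ε/4 := min_le_left _ _
  have hzx0 : ‖x0 - z‖ ≤ r/2 := by
    rw [Metric.mem_closedBall] at hz1
    rw [← dist_eq_norm, dist_comm]; exact hz1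
  set z' : Euc n := if ‖x0 - z‖ ≤ ρ then x0 else z + (ρ / ‖x0 - z‖) • (x0 - z) with hz'def
  have hz'both : ‖z' - z‖ ≤ ρ ∧ ‖x0 - z'‖ ≤ r/2 - ρ := by
    rw [hz'def]
    split_ifs with h
    · refine ⟨h, ?_⟩
      simp only [sub_self, norm_zero]
      linarith
    · push_neg at h
      have ht : 0 < ‖x0 - z‖ := lt_trans hρ h
      constructor
      · have heq : z + (ρ / ‖x0 - z‖) • (x0 - z) - z = (ρ / ‖x0 - z‖) • (x0 - z) := by abel
        rw [heq, norm_smul, Real.norm_eq_abs,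
          abs_of_nonneg (show (0:ℝ) ≤ ρ / ‖x0 - z‖ by positivity),
          div_mul_cancel₀ _ ht.ne']
      · have heq : x0 - (z + (ρ / ‖x0 - z‖) • (x0 - z)) = (1 - ρ / ‖x0 - z‖) • (x0 - z) := by
          rw [sub_smul, one_smul]; abel
        have hc1 : ρ / ‖x0 - z‖ < 1 := (div_lt_one ht).mpr h
        rw [heq, norm_smul, Real.norm_eq_abs, abs_of_nonneg (by linarith),
          sub_mul, one_mul, div_mul_cancel₀ _ ht.ne']
        linarith
  have hz'1 : ‖x0 - z'‖ ≤ r/2 - ρ := hz'both.2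
  have hQz' : ∀ y ∈ Metric.closedBall z' ρ, envl f y ≤ 0 := by
    intro y hy
    have hd : dist y z < ε := by
      calc dist y z ≤ dist y z' + dist z' z := dist_triangle _ _ _
        _ ≤ ρ + ρ := add_le_add (Metric.mem_closedBall.mp hy)
            (by rw [dist_eq_norm]; exact hz'both.1)
        _ < ε := by linarith
    exact hball (Metric.mem_ball.mpr hd)
  set K : ℝ := 4 * ρ / (r * M^2) with hKdef
  have hK : 0 < K := by positivity
  have hKr : K * (r * M^2) = 4 * ρ := by
    rw [hKdef]; field_simp
  set c : ℕ → ℝ := fun k => max 0 (envl f (x k)) with hcdef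
  have hc : ∀ k, c k = max 0 (envl f (x k)) := fun k => rfl
  clear_value c
  clear_value z'
  clear_value ρ
  clear_value K
  -- The key Fejér-type decrease inequality
  have key : ∀ k, ‖x k - z'‖ ≤ r/2 - ρ →
      ‖x (k+1) - z'‖^2 ≤ ‖x k - z'‖^2 - K * (c k)^2 := by
    intro k hk
    obtain ⟨hlam0, hlam1, hlam2, w, ξ, hw, hw1, hwe, hξ, hstep⟩ := halg k
    set ν : Euc n := ∑ i, w i • ξ i with hνdef
    have hsub : ∀ y, envl f (x k) + (inner ℝ ν (y - x k) : ℝ) ≤ envl f y :=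
      envl_subgrad f (x k) w ξ hw hw1 hwe hξ
    clear_value ν
    rcases le_or_gt (envl f (x k)) 0 with hE0 | hE0
    · have hmax : max 0 (envl f (x k)) = 0 := max_eq_left hE0
      rw [hmax] at hlam1 hlam2
      have hlamz : lam k = 0 := by nlinarith [pow_pos hM 2]
      have hck : c k = 0 := (hc k).trans hmax
      rw [hstep, hlamz, zero_smul, sub_zero, hck]
      simp
    · have hmax : max 0 (envl f (x k)) = envl f (x k) := max_eq_right hE0.le
      rw [hmax] at hlam1 hlam2
      have hck : c k = envl f (x k) := (hc k).trans hmax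
      have hxk0 : ‖x k - x0‖ ≤ r - ρ := by
        have h1 : ‖x k - x0‖ ≤ ‖x k - z'‖ + ‖z' - x0‖ := norm_sub_le_norm_sub_add_norm_sub _ _ _
        have h2 : ‖z' - x0‖ = ‖x0 - z'‖ := norm_sub_rev _ _
        rw [h2] at h1
        linarith
      have hνM : ‖ν‖ ≤ M := subgrad_norm_le (envl f) M r ρ x0 (x k) ν hρ hM.le hLip hxk0 hsub
      have hC : envl f (x k) + ρ * ‖ν‖ ≤ (inner ℝ ν (x k - z') : ℝ) :=
        subgrad_interior_bound (envl f) ρ z' (x k) ν hρ hQz' hsub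
      have hCS : (inner ℝ ν (x k - z') : ℝ) ≤ ‖ν‖ * ‖x k - z'‖ := real_inner_le_norm _ _
      have hνlb : 2 * envl f (x k) ≤ ‖ν‖ * r := by
        have h1 : envl f (x k) ≤ ‖ν‖ * ‖x k - z'‖ := by
          nlinarith [norm_nonneg ν]
        have h2 : ‖x k - z'‖ ≤ r/2 := by linarith
        nlinarith [norm_nonneg ν, norm_nonneg (x k - z')]
      have hexp : ‖x (k+1) - z'‖^2 =
          ‖x k - z'‖^2 - 2 * (lam k * (inner ℝ ν (x k - z') : ℝ)) + (lam k)^2 * ‖ν‖^2 := by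
        rw [hstep]
        have heq : x k - lam k • ν - z' = (x k - z') - lam k • ν := by abel
        rw [heq, norm_sub_sq_real, real_inner_smul_right, norm_smul, Real.norm_eq_abs,
          abs_of_nonneg hlam0, mul_pow, real_inner_comm]
      rw [hexp, hck]
      have hprod : envl f (x k) * (2 * envl f (x k)) ≤ (lam k * M^2) * (‖ν‖ * r) :=
        mul_le_mul hlam1 hνlb (by linarith) (by nlinarith)
      have hν2 : ‖ν‖^2 ≤ M^2 := by nlinarith [norm_nonneg ν]
      have hsq : (lam k)^2 * ‖ν‖^2 ≤ lam k * (2 * envl f (x k)) := by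
        nlinarith [sq_nonneg (lam k), hlam0]
      have hA : 2 * (lam k * (inner ℝ ν (x k - z') : ℝ)) ≥
          2 * lam k * envl f (x k) + 2 * lam k * (ρ * ‖ν‖) := by
        nlinarith [mul_le_mul_of_nonneg_left hC (by linarith : (0:ℝ) ≤ 2 * lam k)]
      have hfin : K * (envl f (x k))^2 ≤ 2 * lam k * (ρ * ‖ν‖) := by
        have hpos : 0 < r * M^2 := by positivity
        nlinarith [hprod, hKr, mul_pos hρ (mul_pos hr (pow_pos hM 2))]
      nlinarith [hsq, hA, hfin]
  have hz'0 : ‖x 0 - z'‖ ≤ r/2 - ρ := by rw [hx0]; exact hz'1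
  have inv : ∀ k, ‖x k - z'‖ ≤ r/2 - ρ := by
    intro k
    induction k with
    | zero => exact hz'0
    | succ k ih =>
      have h1 := key k ih
      have h2 : 0 ≤ r/2 - ρ := le_trans (norm_nonneg _) ih
      nlinarith [norm_nonneg (x (k+1) - z'), norm_nonneg (x k - z'),
        mul_nonneg hK.le (sq_nonneg (c k))]
  have hxball : ∀ k, x k ∈ Metric.closedBall x0 r := by
    intro k
    rw [Metric.mem_closedBall, dist_eq_norm]
    have h1 : ‖x k - x0‖ ≤ ‖x k - z'‖ + ‖z' - x0‖ := norm_sub_le_norm_sub_add_norm_sub _ _ _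
    have h2 : ‖z' - x0‖ = ‖x0 - z'‖ := norm_sub_rev _ _
    rw [h2] at h1
    have := inv k
    linarith
  have hdec : ∀ k, ‖x (k+1) - z'‖^2 ≤ ‖x k - z'‖^2 - K * (c k)^2 := fun k => key k (inv k)
  have hsum : ∀ N, ∑ k ∈ Finset.range N, K * (c k)^2 ≤ ‖x 0 - z'‖^2 :=
    sum_range_le_of_step (fun k => ‖x k - z'‖^2) _ (fun k => sq_nonneg _) hdec
  have hsummable : Summable (fun k => K * (c k)^2) :=
    summable_of_sum_range_le (fun k => by positivity) hsum
  have h0 : Tendsto (fun k => K * (c k)^2) atTop (𝓝 0) := hsummable.tendsto_atTop_zero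
  have hc2 : Tendsto (fun k => (c k)^2) atTop (𝓝 0) := by
    have h1 := h0.const_mul K⁻¹
    simp only [mul_zero] at h1
    have heq : (fun k => K⁻¹ * (K * (c k)^2)) = fun k => (c k)^2 := by
      funext k
      rw [← mul_assoc, inv_mul_cancel₀ hK.ne', one_mul]
    rwa [heq] at h1
  have hc0 : Tendsto c atTop (𝓝 0) := by
    have h1 : Tendsto (fun k => Real.sqrt ((c k)^2)) atTop (𝓝 (Real.sqrt 0)) :=
      (Real.continuous_sqrt.tendsto 0).comp hc2
    rw [Real.sqrt_zero] at h1
    have heq : (fun k => Real.sqrt ((c k)^2)) = c := funext fun k =>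
      Real.sqrt_sq (by rw [hc k]; exact le_max_left _ _)
    rwa [heq] at h1
  constructor
  · obtain ⟨xs, _, φ, hφ, hlim⟩ := (isCompact_closedBall x0 r).tendsto_subseq hxball
    exact ⟨xs, φ, hφ, hlim⟩
  · rintro xs ⟨φ, hφ, hlim⟩
    have hxs : xs ∈ Metric.closedBall x0 r :=
      Metric.isClosed_closedBall.mem_of_tendsto hlim
        (Filter.Eventually.of_forall fun j => hxball (φ j))
    have hdist : Tendsto (fun j => ‖x (φ j) - xs‖) atTop (𝓝 0) := by
      have := tendsto_iff_norm_sub_tendsto_zero.mp hlim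
      simpa [Function.comp] using this
    have hFlim : Tendsto (fun j => envl f (x (φ j))) atTop (𝓝 (envl f xs)) := by
      have hb : ∀ j, ‖envl f (x (φ j)) - envl f xs‖ ≤ M * ‖x (φ j) - xs‖ := fun j => by
        rw [Real.norm_eq_abs]
        exact hLip _ _ (hxball (φ j)) hxs
      have h2 : Tendsto (fun j => M * ‖x (φ j) - xs‖) atTop (𝓝 0) := by
        have := hdist.const_mul M
        simpa using this
      have h3 := squeeze_zero_norm hb h2
      have h4 := h3.add_const (envl f xs)
      simpa using h4
    have hcφ : Tendsto (fun j => c (φ j)) atTop (𝓝 0) := hc0.comp hφ.tendsto_atTop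
    have hmaxlim : Tendsto (fun j => c (φ j)) atTop (𝓝 (max 0 (envl f xs))) := by
      have h5 : Tendsto (fun j => max 0 (envl f (x (φ j)))) atTop (𝓝 (max 0 (envl f xs))) :=
        Tendsto.max tendsto_const_nhds hFlim
      simpa only [← hc] using h5
    have hzero : max 0 (envl f xs) = 0 := tendsto_nhds_unique hmaxlim hcφ
    rwa [max_eq_left_iff] at hzero

end
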